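/- Let Γ be a finite normal-form game, σ a Nash equilibrium of Γ, and {σ^λ}_{λ∈ℕ} a convergent sequence of interior payoff monotone strategy profiles for Γ with limit σ. Then there exist a strictly increasing function κ : ℕ → ℕ and a sequence {f^λ}_{λ∈ℕ} of profiles of control cost functions such that: (1) the sequence {f^λ} vanishes, i.e., for each player i and each x ∈ (0,1], f^λ_i(x) → 0 as λ → ∞; and (2) for each λ, the profile σ^{κ(λ)} satisfies the first-order equilibrium conditions of the control cost game associated with Γ and f^λ: for each player i and each pair of actions a_l, a_k ∈ A_i, U_i(σ^{κ(λ)}_{-i},a_l) − U_i(σ^{κ(λ)}_{-i},a_k) = (f^λ_i)'(σ^{κ(λ)}_i(a_l)) − (f^λ_i)'(σ^{κ(λ)}_i(a_k)). -/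

import Mathlib

open Filter Topology

section GameDefs

variable {N : Type} [Fintype N] [DecidableEq N] {A : N → Type}
  [∀ i, Fintype (A i)] [∀ i, DecidableEq (A i)]

/-- A mixed-strategy profile: each `σ i` is a probability distribution on `A i`. -/
def IsStrategy (σ : ∀ i, A i → ℝ) : Prop :=
  (∀ i a, 0 ≤ σ i a) ∧ ∀ i, ∑ a, σ i a = 1

/-- An interior profile places positive probability on every action. -/
def Interior (σ : ∀ i, A i → ℝ) : Prop :=
  ∀ i a, 0 < σ i a

/-- Expected utility of player `i` at profile `σ`. -/
noncomputable def expUtil (u : ∀ i : N, (∀ j, A j) → ℝ) (σ : ∀ i, A i → ℝ) (i : N) : ℝ :=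
  ∑ a : ∀ j, A j, u i a * ∏ j, σ j (a j)

/-- Expected utility of player `i` from playing action `ai` against `σ₋ᵢ`. -/
noncomputable def devUtil (u : ∀ i : N, (∀ j, A j) → ℝ) (σ : ∀ i, A i → ℝ)
    (i : N) (ai : A i) : ℝ :=
  expUtil u (Function.update σ i (fun b => if b = ai then (1 : ℝ) else 0)) i

/-- Nash equilibrium. -/
def IsNash (u : ∀ i : N, (∀ j, A j) → ℝ) (σ : ∀ i, A i → ℝ) : Prop :=
  IsStrategy σ ∧ ∀ (i : N) (μ : A i → ℝ), (∀ a, 0 ≤ μ a) → (∑ a, μ a = 1) →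
    expUtil u (Function.update σ i μ) i ≤ expUtil u σ i

/-- Weak payoff monotonicity: differences in behavior reveal differences in payoffs. -/
def WeaklyPayoffMonotone (u : ∀ i : N, (∀ j, A j) → ℝ) (σ : ∀ i, A i → ℝ) : Prop :=
  IsStrategy σ ∧ ∀ (i : N) (ai bi : A i), σ i bi < σ i ai →
    devUtil u σ i bi < devUtil u σ i ai

/-- Payoff monotonicity. -/
def PayoffMonotone (u : ∀ i : N, (∀ j, A j) → ℝ) (σ : ∀ i, A i → ℝ) : Prop :=
  IsStrategy σ ∧ ∀ (i : N) (ai bi : A i),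
    σ i bi ≤ σ i ai ↔ devUtil u σ i bi ≤ devUtil u σ i ai

/-- Pointwise convergence of a sequence of profiles. -/
def ConvergesTo (s : ℕ → ∀ i, A i → ℝ) (σ : ∀ i, A i → ℝ) : Prop :=
  ∀ (i : N) (ai : A i), Tendsto (fun n => s n i ai) atTop (𝓝 (σ i ai))

/-- Empirical equilibrium: a Nash equilibrium that is the limit of weakly payoff
monotone profiles. -/
def IsEmpirical (u : ∀ i : N, (∀ j, A j) → ℝ) (σ : ∀ i, A i → ℝ) : Prop :=
  IsNash u σ ∧ ∃ s : ℕ → ∀ i, A i → ℝ,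
    (∀ n, WeaklyPayoffMonotone u (s n)) ∧ ConvergesTo s σ

/-- Proper equilibrium (Myerson). -/
def IsProper (u : ∀ i : N, (∀ j, A j) → ℝ) (σ : ∀ i, A i → ℝ) : Prop :=
  IsStrategy σ ∧ ∃ s : ℕ → ∀ i, A i → ℝ,
    (∀ n, IsStrategy (s n) ∧ Interior (s n) ∧
      ∀ (i : N) (ai bi : A i),
        devUtil u (s n) i bi < devUtil u (s n) i ai →
          s n i bi ≤ (1 / (n + 1) : ℝ) * s n i ai) ∧
    ConvergesTo s σ

/-- Perfect equilibrium (Selten, in Myerson's formulation). -/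
def IsPerfect (u : ∀ i : N, (∀ j, A j) → ℝ) (σ : ∀ i, A i → ℝ) : Prop :=
  IsStrategy σ ∧ ∃ s : ℕ → ∀ i, A i → ℝ,
    (∀ n, IsStrategy (s n) ∧ Interior (s n) ∧
      ∀ (i : N) (ai : A i), (1 / (n + 1) : ℝ) < s n i ai →
        ∀ bi : A i, devUtil u (s n) i bi ≤ devUtil u (s n) i ai) ∧
    ConvergesTo s σ

/-- `bi` weakly dominates `ai` for player `i`. -/
def WeaklyDominates (u : ∀ i : N, (∀ j, A j) → ℝ) (i : N) (bi ai : A i) : Prop :=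
  (∀ a : ∀ j, A j, u i (Function.update a i ai) ≤ u i (Function.update a i bi)) ∧
  ∃ a : ∀ j, A j, u i (Function.update a i ai) < u i (Function.update a i bi)

/-- Undominated Nash equilibrium. -/
def IsUndominatedNash (u : ∀ i : N, (∀ j, A j) → ℝ) (σ : ∀ i, A i → ℝ) : Prop :=
  IsNash u σ ∧ ∀ (i : N) (ai : A i), 0 < σ i ai →
    ¬ ∃ bi : A i, WeaklyDominates u i bi ai

end GameDefs

/-- A regular quantal response function on a finite set of actions `B`:
interiority, continuity, responsiveness, and monotonicity. -/
def IsRegularQRF {B : Type} [Fintype B] [DecidableEq B]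
    (p : (B → ℝ) → (B → ℝ)) : Prop :=
  (∀ x, (∀ a, 0 < p x a) ∧ ∑ a, p x a = 1) ∧
  Continuous p ∧
  (∀ (x : B → ℝ) (η : ℝ) (a : B), 0 < η →
    p x a < p (Function.update x a (x a + η)) a) ∧
  ∀ (x : B → ℝ) (a b : B), x b < x a → p x b < p x a

section QREDefs

variable {N : Type} [Fintype N] [DecidableEq N] {A : N → Type}
  [∀ i, Fintype (A i)] [∀ i, DecidableEq (A i)]

/-- Quantal response equilibrium with respect to a profile of QRFs `p`. -/
def IsQRE (u : ∀ i : N, (∀ j, A j) → ℝ) (p : ∀ i, (A i → ℝ) → (A i → ℝ))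
    (σ : ∀ i, A i → ℝ) : Prop :=
  ∀ i : N, σ i = p i (fun ai => devUtil u σ i ai)

/-- A sequence of profiles of QRFs is utility maximizing in the limit. -/
def UtilityMaximizingInLimit (u : ∀ i : N, (∀ j, A j) → ℝ)
    (p : ℕ → ∀ i, (A i → ℝ) → (A i → ℝ)) : Prop :=
  ∀ (s : ℕ → ∀ i, A i → ℝ) (σ : ∀ i, A i → ℝ),
    (∀ n, IsQRE u (p n) (s n)) → ConvergesTo s σ → IsNash u σ

/-- `σ` is approachable by regular QRE that are utility maximizing in the limit. -/
def ApproachableByRegularQRE (u : ∀ i : N, (∀ j, A j) → ℝ) (σ : ∀ i, A i → ℝ) : Prop :=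
  ∃ p : ℕ → ∀ i, (A i → ℝ) → (A i → ℝ),
    (∀ n i, IsRegularQRF (p n i)) ∧ UtilityMaximizingInLimit u p ∧
    ∃ s : ℕ → ∀ i, A i → ℝ, (∀ n, IsQRE u (p n) (s n)) ∧ ConvergesTo s σ

end QREDefs
section GameHelpers

variable {N : Type} [Fintype N] [DecidableEq N] {A : N → Type}
  [∀ i, Fintype (A i)] [∀ i, DecidableEq (A i)]

lemma expUtil_eq_sum_devUtil (u : ∀ i : N, (∀ j, A j) → ℝ) (σ : ∀ i, A i → ℝ) (i : N) :
    expUtil u σ i = ∑ b, σ i b * devUtil u σ i b := by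
  classical
  have hprod : ∀ (b : A i) (a : ∀ j, A j),
      (∏ j, Function.update σ i (fun c => if c = b then (1:ℝ) else 0) j (a j))
        = (if a i = b then (1:ℝ) else 0) * ∏ j ∈ Finset.univ.erase i, σ j (a j) := by
    intro b a
    rw [← Finset.mul_prod_erase Finset.univ _ (Finset.mem_univ i)]
    congr 1
    · simp
    · refine Finset.prod_congr rfl fun j hj => ?_
      rw [Function.update_of_ne (Finset.mem_erase.1 hj).1]
  calc expUtil u σ i
      = ∑ a : ∀ j, A j, u i a * (σ i (a i) * ∏ j ∈ Finset.univ.erase i, σ j (a j)) := by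
        simp only [expUtil]
        refine Finset.sum_congr rfl fun a _ => ?_
        rw [← Finset.mul_prod_erase Finset.univ _ (Finset.mem_univ i)]
    _ = ∑ b, σ i b * devUtil u σ i b := by
        simp only [devUtil, expUtil, hprod, Finset.mul_sum]
        rw [Finset.sum_comm]
        refine Finset.sum_congr rfl fun a _ => ?_
        simp only [mul_ite, ite_mul, mul_one, one_mul, mul_zero, zero_mul, Finset.sum_ite_eq,
          Finset.mem_univ, if_true]
        ring

lemma devUtil_le_expUtil (u : ∀ i : N, (∀ j, A j) → ℝ) (σ : ∀ i, A i → ℝ)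
    (hσ : IsNash u σ) (i : N) (a : A i) : devUtil u σ i a ≤ expUtil u σ i := by
  classical
  refine hσ.2 i _ (fun b => by positivity) ?_
  simp [Finset.sum_ite_eq']

lemma devUtil_eq_expUtil_of_pos (u : ∀ i : N, (∀ j, A j) → ℝ) (σ : ∀ i, A i → ℝ)
    (hσ : IsNash u σ) (i : N) (b0 : A i) (hb0 : 0 < σ i b0) :
    devUtil u σ i b0 = expUtil u σ i := by
  classical
  by_contra hne
  have hlt : devUtil u σ i b0 < expUtil u σ i :=
    lt_of_le_of_ne (devUtil_le_expUtil u σ hσ i b0) hne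
  have hsum := expUtil_eq_sum_devUtil u σ i
  have h1 : ∑ b, σ i b * devUtil u σ i b < ∑ b, σ i b * expUtil u σ i := by
    refine Finset.sum_lt_sum (fun b _ => ?_) ⟨b0, Finset.mem_univ b0, ?_⟩
    · exact mul_le_mul_of_nonneg_left (devUtil_le_expUtil u σ hσ i b) (hσ.1.1 i b)
    · exact mul_lt_mul_of_pos_left hlt hb0
  rw [← Finset.sum_mul, hσ.1.2 i, one_mul] at h1
  linarith [hsum ▸ h1]

lemma tendsto_devUtil (u : ∀ i : N, (∀ j, A j) → ℝ) (s : ℕ → ∀ i, A i → ℝ)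
    (σ : ∀ i, A i → ℝ) (hconv : ConvergesTo s σ) (i : N) (a : A i) :
    Tendsto (fun n => devUtil u (s n) i a) atTop (𝓝 (devUtil u σ i a)) := by
  classical
  simp only [devUtil, expUtil]
  refine tendsto_finset_sum _ fun a' _ => ?_
  refine Tendsto.const_mul _ ?_
  refine tendsto_finset_prod _ fun j _ => ?_
  by_cases hj : j = i
  · subst hj
    simp only [Function.update_self]
    exact tendsto_const_nhds
  · simp only [Function.update_of_ne hj]
    exact hconv j (a' j)

end GameHelpers

/-- A control cost function (van Damme), bundled with its derivative on `(0,1]`. -/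
structure ControlCost where
  f : ℝ → ℝ
  f' : ℝ → ℝ
  hasDeriv : ∀ x ∈ Set.Ioc (0:ℝ) 1, HasDerivWithinAt f (f' x) (Set.Ioc (0:ℝ) 1) x
  contDeriv : ContinuousOn f' (Set.Ioc (0:ℝ) 1)
  anti : StrictAntiOn f (Set.Ioc (0:ℝ) 1)
  convex : StrictConvexOn ℝ (Set.Ioc (0:ℝ) 1) f
  atOne : f 1 = 0
  blowup : Tendsto f (nhdsWithin 0 (Set.Ioi (0:ℝ))) atTop

set_option maxHeartbeats 1000000 in
lemma exists_controlCost {B : Type} [Fintype B] [Nonempty B] (p v : B → ℝ)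
    (hp0 : ∀ a, 0 < p a) (hp1 : ∀ a, p a ≤ 1)
    (hlt : ∀ a b, p b < p a → v b < v a) (heq : ∀ a b, p a = p b → v a = v b)
    (e : ℝ) (he0 : 0 < e) (he1 : e ≤ 1) :
    ∃ cc : ControlCost,
      (∀ al ak, cc.f' (p al) - cc.f' (p ak) = v al - v ak) ∧
      (∀ x, 0 < x → x ≤ 1 → 0 ≤ cc.f x) ∧
      (∀ x V, 0 < x → x ≤ 1 → (∃ b, V ≤ v b) → (∀ b, V ≤ v b ∨ p b + e ≤ x) →
        cc.f x ≤ (Finset.univ.sup' Finset.univ_nonempty v - V) + 3 * e + e / x) := by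
  classical
  have hBB : (Finset.univ : Finset (B × B)).Nonempty := Finset.univ_nonempty
  have hB : (Finset.univ : Finset B).Nonempty := Finset.univ_nonempty
  set γ : ℝ := min e ((Finset.univ : Finset (B × B)).inf' hBB fun ab =>
      if p ab.2 < p ab.1 then p ab.1 - p ab.2 else 1) with hγdef
  set ε : ℝ := min e ((Finset.univ : Finset (B × B)).inf' hBB fun ab =>
      if p ab.2 < p ab.1 then (v ab.1 - v ab.2) / (p ab.1 - p ab.2) else 1) with hεdef
  set M : ℝ := Finset.univ.sup' hB v with hMdef
  have hvM : ∀ a, v a ≤ M := fun a => Finset.le_sup' v (Finset.mem_univ a)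
  have hγ0 : 0 < γ := by
    refine lt_min he0 ((Finset.lt_inf'_iff hBB).2 fun ab _ => ?_)
    by_cases hab : p ab.2 < p ab.1
    · simpa [hab] using sub_pos.2 hab
    · simpa [hab] using one_pos
  have hγe : γ ≤ e := min_le_left _ _
  have hγgap : ∀ a b, p b < p a → γ ≤ p a - p b := by
    intro a b hab
    refine le_trans (min_le_right _ _) ?_
    have := Finset.inf'_le (f := fun ab : B × B =>
      if p ab.2 < p ab.1 then p ab.1 - p ab.2 else 1) (b := (a, b)) (Finset.mem_univ (a, b))
    exact this.trans (le_of_eq (if_pos hab))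
  have hε0 : 0 < ε := by
    refine lt_min he0 ((Finset.lt_inf'_iff hBB).2 fun ab _ => ?_)
    by_cases hab : p ab.2 < p ab.1
    · have h1 := hlt ab.1 ab.2 hab
      have := div_pos (sub_pos.2 h1) (sub_pos.2 hab)
      simpa [hab] using this
    · simpa [hab] using one_pos
  have hεe : ε ≤ e := min_le_left _ _
  have hεratio : ∀ a b, p b < p a → ε * (p a - p b) ≤ v a - v b := by
    intro a b hab
    have h1 : ε ≤ (v a - v b) / (p a - p b) := by
      refine le_trans (min_le_right _ _) ?_
      have := Finset.inf'_le (f := fun ab : B × B =>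
        if p ab.2 < p ab.1 then (v ab.1 - v ab.2) / (p ab.1 - p ab.2) else 1)
        (b := (a, b)) (Finset.mem_univ (a, b))
      exact this.trans (le_of_eq (if_pos hab))
    have hd : 0 < p a - p b := sub_pos.2 hab
    calc ε * (p a - p b) ≤ ((v a - v b) / (p a - p b)) * (p a - p b) :=
          mul_le_mul_of_nonneg_right h1 hd.le
      _ = v a - v b := div_mul_cancel₀ _ hd.ne'
  set ℓ : B → ℝ → ℝ := fun a t =>
    v a + ε * (t - p a) + (M - v a) * (min (max (t - p a) 0) γ / γ) with hℓdef
  set h : ℝ → ℝ := fun t => Finset.univ.inf' hB fun a => ℓ a t with hhdef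
  set q : ℝ := Finset.univ.inf' hB p with hqdef
  set g : ℝ → ℝ := fun t => max (q - t) 0 / t with hgdef
  set F : ℝ → ℝ := fun t => (h 1 + e) - h t + e * g t with hFdef
  set f : ℝ → ℝ := fun x => ∫ t in x..1, F t with hfdef
  set f'' : ℝ → ℝ := fun x => h x - (h 1 + e) - e * g x with hf''def
  have hq0 : 0 < q := (Finset.lt_inf'_iff hB).2 fun a _ => hp0 a
  have hqp : ∀ a, q ≤ p a := fun a => Finset.inf'_le p (Finset.mem_univ a)
  have hq1 : q ≤ 1 := le_trans (hqp (Classical.arbitrary B)) (hp1 _)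
  -- step term bounds
  have hstep_nonneg : ∀ a t, 0 ≤ (M - v a) * (min (max (t - p a) 0) γ / γ) := by
    intro a t
    have h1 : 0 ≤ M - v a := sub_nonneg.2 (hvM a)
    have h2 : 0 ≤ min (max (t - p a) 0) γ := le_min (le_max_right _ _) hγ0.le
    positivity
  have hstep_le : ∀ a t, (M - v a) * (min (max (t - p a) 0) γ / γ) ≤ M - v a := by
    intro a t
    have h1 : 0 ≤ M - v a := sub_nonneg.2 (hvM a)
    have h2 : min (max (t - p a) 0) γ / γ ≤ 1 := by
      rw [div_le_one hγ0]; exact min_le_right _ _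
    nlinarith
  have hstep_mono : ∀ a {x y : ℝ}, x ≤ y →
      (M - v a) * (min (max (x - p a) 0) γ / γ) ≤ (M - v a) * (min (max (y - p a) 0) γ / γ) := by
    intro a x y hxy
    have h1 : 0 ≤ M - v a := sub_nonneg.2 (hvM a)
    gcongr
  have hstep_full : ∀ a t, γ ≤ t - p a →
      (M - v a) * (min (max (t - p a) 0) γ / γ) = M - v a := by
    intro a t ht
    have : min (max (t - p a) 0) γ = γ := by
      rw [max_eq_left (le_trans hγ0.le ht), min_eq_right ht]
    rw [this, div_self hγ0.ne', mul_one]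
  have hℓmono : ∀ a, Monotone (ℓ a) := by
    intro a x y hxy
    have := hstep_mono a hxy
    simp only [hℓdef]
    nlinarith
  have hℓstrict : ∀ a, StrictMono (ℓ a) := by
    intro a x y hxy
    have := hstep_mono a hxy.le
    simp only [hℓdef]
    nlinarith
  have hℓcont : ∀ a, Continuous (ℓ a) := by
    intro a
    simp only [hℓdef]
    fun_prop
  have hhcont : Continuous h := by
    simp only [hhdef]
    exact Continuous.finset_inf'_apply hB fun a _ => hℓcont a
  have hhmono : Monotone h := by
    intro x y hxy
    obtain ⟨a0, -, ha0⟩ := Finset.exists_mem_eq_inf' hB (fun a => ℓ a y)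
    calc h x ≤ ℓ a0 x := Finset.inf'_le _ (Finset.mem_univ a0)
      _ ≤ ℓ a0 y := hℓmono a0 hxy
      _ = h y := ha0.symm
  have hhstrict : StrictMono h := by
    intro x y hxy
    obtain ⟨a0, -, ha0⟩ := Finset.exists_mem_eq_inf' hB (fun a => ℓ a y)
    calc h x ≤ ℓ a0 x := Finset.inf'_le _ (Finset.mem_univ a0)
      _ < ℓ a0 y := hℓstrict a0 hxy
      _ = h y := ha0.symm
  -- interpolation: h (p a) = v a
  have hℓself : ∀ a, ℓ a (p a) = v a := by
    intro a
    simp [hℓdef, min_eq_left hγ0.le]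
  have hinterp : ∀ a, h (p a) = v a := by
    intro a
    refine le_antisymm (hℓself a ▸ Finset.inf'_le _ (Finset.mem_univ a)) ?_
    refine Finset.le_inf' hB _ fun b _ => ?_
    rcases lt_trichotomy (p b) (p a) with hb | hb | hb
    · have h1 := hstep_full b (p a) (hγgap a b hb)
      have h2 : 0 ≤ ε * (p a - p b) := by nlinarith
      simp only [hℓdef] at h1 ⊢
      rw [h1]
      have := hvM a
      linarith
    · have := heq a b hb.symm
      simp only [hℓdef, hb, sub_self, max_self, mul_zero, min_eq_left hγ0.le]
      simp [this, hb]
    · have h1 : max (p a - p b) 0 = 0 := max_eq_right (by linarith)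
      have h2 := hεratio b a hb
      simp only [hℓdef, h1]
      rw [min_eq_left hγ0.le]
      simp only [zero_div, mul_zero, add_zero]
      linarith
  have hgpa : ∀ a, g (p a) = 0 := by
    intro a
    have : max (q - p a) 0 = 0 := max_eq_right (by linarith [hqp a])
    simp [hgdef, this]
  have hgnonneg : ∀ t, 0 < t → 0 ≤ g t := by
    intro t ht
    exact div_nonneg (le_max_right _ _) ht.le
  have hganti : ∀ {x y : ℝ}, 0 < x → x ≤ y → g y ≤ g x := by
    intro x y hx hxy
    simp only [hgdef]
    exact div_le_div₀ (le_max_right (q - x) 0) (max_le_max (by linarith) le_rfl) hx hxy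

  -- continuity and integrability of F on (0, ∞)
  have hFcont : ContinuousOn F (Set.Ioi (0:ℝ)) := by
    simp only [hFdef, hgdef]
    refine ContinuousOn.add (ContinuousOn.sub continuousOn_const hhcont.continuousOn) ?_
    refine continuousOn_const.mul (ContinuousOn.div ?_ continuousOn_id ?_)
    · fun_prop
    · intro t ht; exact ne_of_gt ht
  have huIcc : ∀ {x y : ℝ}, 0 < x → 0 < y → Set.uIcc x y ⊆ Set.Ioi (0:ℝ) := by
    intro x y hx hy
    intro t ht
    rcases Set.mem_uIcc.1 ht with h' | h'
    · exact lt_of_lt_of_le hx h'.1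
    · exact lt_of_lt_of_le hy h'.1
  have hFint : ∀ {x y : ℝ}, 0 < x → 0 < y → IntervalIntegrable F MeasureTheory.volume x y := by
    intro x y hx hy
    exact (hFcont.mono (huIcc hx hy)).intervalIntegrable

  have hderiv : ∀ x, 0 < x → HasDerivAt f (-(F x)) x := by
    intro x hx
    have h1 : HasDerivAt (fun u => ∫ t in (1:ℝ)..u, F t) (F x) x := by
      refine intervalIntegral.integral_hasDerivAt_right (hFint one_pos hx) ?_ ?_
      · exact (hFcont.stronglyMeasurableAtFilter isOpen_Ioi) x hx
      · exact hFcont.continuousAt (isOpen_Ioi.mem_nhds hx)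
    have h2 : f = fun u => -(∫ t in (1:ℝ)..u, F t) := by
      funext u
      simp only [hfdef]
      rw [intervalIntegral.integral_symm]
    rw [h2]
    exact h1.neg
  have hf''F : ∀ x, f'' x = -(F x) := by
    intro x
    simp only [hf''def, hFdef]
    ring
  have hFlb : ∀ t, 0 < t → t ≤ 1 → e ≤ F t := by
    intro t ht ht1
    have h1 : h t ≤ h 1 := hhmono ht1
    have h2 : 0 ≤ e * g t := mul_nonneg he0.le (hgnonneg t ht)
    simp only [hFdef]
    linarith
  -- f is nonnegative on (0,1]
  have hfnonneg : ∀ x, 0 < x → x ≤ 1 → 0 ≤ f x := by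
    intro x hx hx1
    simp only [hfdef]
    refine intervalIntegral.integral_nonneg hx1 fun t ht => ?_
    exact le_trans he0.le (hFlb t (lt_of_lt_of_le hx ht.1) ht.2)

  have hanti : StrictAntiOn f (Set.Ioc (0:ℝ) 1) := by
    intro x hx y hy hxy
    have hadd : (∫ t in x..y, F t) + (∫ t in y..1, F t) = ∫ t in x..1, F t :=
      intervalIntegral.integral_add_adjacent_intervals (hFint hx.1 hy.1) (hFint hy.1 one_pos)
    have hpos : 0 < ∫ t in x..y, F t := by
      refine intervalIntegral.intervalIntegral_pos_of_pos_on (hFint hx.1 hy.1) ?_ hxy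
      intro t ht
      exact lt_of_lt_of_le he0 (hFlb t (lt_trans hx.1 ht.1) (le_trans ht.2.le hy.2))
    show f y < f x
    simp only [hfdef]
    linarith
  have hderivIoo : ∀ x ∈ Set.Ioo (0:ℝ) 1, deriv f x = -(F x) := fun x hx => (hderiv x hx.1).deriv
  have hconv : StrictConvexOn ℝ (Set.Ioc (0:ℝ) 1) f := by
    refine StrictMonoOn.strictConvexOn_of_deriv (convex_Ioc 0 1) ?_ ?_
    · intro x hx
      exact (hderiv x hx.1).continuousAt.continuousWithinAt
    · rw [interior_Ioc]
      intro x hx y hy hxy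
      rw [hderivIoo x hx, hderivIoo y hy]
      have h1 : h x < h y := hhstrict hxy
      have h2 : e * g y ≤ e * g x := mul_le_mul_of_nonneg_left (hganti hx.1 hxy.le) he0.le
      simp only [hFdef]
      linarith
  have hblow : Tendsto f (𝓝[>] (0:ℝ)) atTop := by
    have hq2 : 0 < q / 2 := by linarith
    have hq21 : q / 2 ≤ 1 := by linarith
    have hbound : ∀ x ∈ Set.Ioo (0:ℝ) (q/2),
        e * (q/2) * (Real.log (q/2) - Real.log x) ≤ f x := by
      intro x hx
      obtain ⟨hx0, hxq⟩ := hx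
      have hadd : (∫ t in x..q/2, F t) + (∫ t in (q/2)..(1:ℝ), F t) = ∫ t in x..1, F t :=
        intervalIntegral.integral_add_adjacent_intervals (hFint hx0 hq2) (hFint hq2 one_pos)
      have h2 : 0 ≤ ∫ t in (q/2)..(1:ℝ), F t :=
        intervalIntegral.integral_nonneg hq21 fun t ht =>
          le_trans he0.le (hFlb t (lt_of_lt_of_le hq2 ht.1) ht.2)
      have h3 : (∫ t in x..q/2, (e * (q/2)) * t⁻¹) ≤ ∫ t in x..q/2, F t := by
        refine intervalIntegral.integral_mono_on hxq.le ?_ (hFint hx0 hq2) ?_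
        · refine ContinuousOn.intervalIntegrable ?_
          refine (continuousOn_const.mul (continuousOn_inv₀.mono ?_))
          intro t ht
          rcases Set.mem_uIcc.1 ht with h' | h'
          · exact ne_of_gt (lt_of_lt_of_le hx0 h'.1)
          · exact ne_of_gt (lt_of_lt_of_le hq2 h'.1)
        · intro t ht
          obtain ⟨ht1, ht2⟩ := ht
          have ht0 : 0 < t := lt_of_lt_of_le hx0 ht1
          have hFt : e * g t ≤ F t := by
            have : h t ≤ h 1 := hhmono (by linarith)
            simp only [hFdef]
            linarith
          refine le_trans ?_ hFt
          have hg : (q/2) * t⁻¹ ≤ g t := by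
            have hmax : max (q - t) 0 = q - t := max_eq_left (by linarith)
            simp only [hgdef, hmax]
            rw [div_eq_mul_inv]
            exact mul_le_mul_of_nonneg_right (by linarith) (inv_nonneg.2 ht0.le)
          calc e * (q/2) * t⁻¹ = e * ((q/2) * t⁻¹) := by ring
            _ ≤ e * g t := mul_le_mul_of_nonneg_left hg he0.le
      have h4 : (∫ t in x..q/2, (e * (q/2)) * t⁻¹)
          = e * (q/2) * (Real.log (q/2) - Real.log x) := by
        rw [intervalIntegral.integral_const_mul, integral_inv_of_pos hx0 hq2,
          Real.log_div hq2.ne' hx0.ne']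
      rw [h4] at h3
      simp only [hfdef]
      linarith
    have hlog : Tendsto (fun x : ℝ => e * (q/2) * (Real.log (q/2) - Real.log x))
        (𝓝[>] (0:ℝ)) atTop := by
      refine Tendsto.const_mul_atTop (by positivity) ?_
      simp only [sub_eq_add_neg]
      refine tendsto_atTop_add_const_left _ _ ?_
      exact tendsto_neg_atBot_atTop.comp Real.tendsto_log_nhdsGT_zero
    refine tendsto_atTop_mono' _ ?_ hlog
    filter_upwards [Ioo_mem_nhdsGT_of_mem (Set.mem_Ico.2 ⟨le_refl (0:ℝ), hq2⟩)] with x hx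
    exact hbound x hx
  -- upper bound used for the vanishing property
  have hub : ∀ x V, 0 < x → x ≤ 1 → (∃ b, V ≤ v b) → (∀ b, V ≤ v b ∨ p b + e ≤ x) →
      f x ≤ (M - V) + 3 * e + e / x := by
    rintro x V hx hx1 ⟨b0, hb0⟩ hcase
    have hVM : V ≤ M := le_trans hb0 (hvM b0)
    have hh1 : h 1 ≤ M + e := by
      obtain ⟨a0, -, ha0⟩ := Finset.exists_mem_eq_sup' hB v
      have h1 : h 1 ≤ ℓ a0 1 := Finset.inf'_le _ (Finset.mem_univ a0)
      have hMa0 : M - v a0 = 0 := by rw [hMdef, ha0, sub_self]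
      have h2 : ε * (1 - p a0) ≤ e := by nlinarith [hp0 a0, hp1 a0]
      simp only [hℓdef, hMa0, zero_mul, add_zero] at h1
      have := hvM a0
      linarith
    have hht : ∀ t, x ≤ t → t ≤ 1 → V - e ≤ h t := by
      intro t hxt ht1
      refine Finset.le_inf' hB _ fun b _ => ?_
      rcases hcase b with hb | hb
      · have h1 : -e ≤ ε * (t - p b) := by nlinarith [hp1 b]
        have h2 := hstep_nonneg b t
        simp only [hℓdef]
        linarith
      · have hfull := hstep_full b t (by linarith)
        have h1 : 0 ≤ ε * (t - p b) := by nlinarith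
        simp only [hℓdef]
        rw [hfull]
        linarith [hvM b0]
    have hgub : ∀ t, x ≤ t → g t ≤ 1 / x := by
      intro t hxt
      have ht0 : 0 < t := lt_of_lt_of_le hx hxt
      have h1 : max (q - t) 0 ≤ 1 := by
        refine max_le (by linarith) (by norm_num)
      calc g t ≤ 1 / t := by
            simp only [hgdef]
            exact div_le_div₀ one_pos.le h1 ht0 le_rfl
        _ ≤ 1 / x := one_div_le_one_div_of_le hx hxt
    have hK : 0 ≤ (M - V) + 3 * e + e / x := by
      have : 0 < e / x := div_pos he0 hx
      linarith
    have hFub : ∀ t ∈ Set.Icc x 1, F t ≤ (M - V) + 3 * e + e / x := by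
      intro t ht
      have h1 := hht t ht.1 ht.2
      have h2 : e * g t ≤ e * (1 / x) := mul_le_mul_of_nonneg_left (hgub t ht.1) he0.le
      have h3 : e * (1 / x) = e / x := by ring
      simp only [hFdef]
      linarith
    calc f x ≤ ∫ _t in x..1, ((M - V) + 3 * e + e / x) :=
          intervalIntegral.integral_mono_on hx1 (hFint hx one_pos)
            intervalIntegrable_const hFub
      _ = (1 - x) * ((M - V) + 3 * e + e / x) := by
          rw [intervalIntegral.integral_const, smul_eq_mul]
      _ ≤ 1 * ((M - V) + 3 * e + e / x) := mul_le_mul_of_nonneg_right (by linarith) hK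
      _ = (M - V) + 3 * e + e / x := one_mul _
  have heqf'' : f'' = fun x => -(F x) := funext hf''F
  refine ⟨⟨f, f'', ?_, ?_, hanti, hconv, ?_, hblow⟩, ?_, hfnonneg, ?_⟩
  · intro x hx
    rw [hf''F x]
    exact (hderiv x hx.1).hasDerivWithinAt
  · rw [heqf'']
    exact (hFcont.mono (fun t ht => ht.1)).neg
  · simp only [hfdef]
    exact intervalIntegral.integral_same
  · intro al ak
    show f'' (p al) - f'' (p ak) = v al - v ak
    simp only [hf''def]
    rw [hinterp al, hinterp ak, hgpa al, hgpa ak]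
    ring
  · intro x V hx hx1 hex hcase
    exact hub x V hx hx1 hex hcase

/-- along a subsequence, a convergent sequence of interior payoff
monotone profiles with Nash limit consists of equilibria of control cost games with
vanishing control cost functions (expressed via first-order conditions). -/
theorem empirical_via_vanishing_control_costs {N : Type} [Fintype N] [DecidableEq N] {A : N → Type}
    [∀ i, Fintype (A i)] [∀ i, DecidableEq (A i)] [∀ i, Nonempty (A i)]
    (u : ∀ i : N, (∀ j, A j) → ℝ) (σ : ∀ i, A i → ℝ) (hσ : IsNash u σ)
    (s : ℕ → ∀ i, A i → ℝ)
    (hs : ∀ n, Interior (s n) ∧ PayoffMonotone u (s n))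
    (hconv : ConvergesTo s σ) :
    ∃ (κ : ℕ → ℕ) (f : ℕ → N → ControlCost),
      StrictMono κ ∧
      (∀ i : N, ∀ x ∈ Set.Ioc (0:ℝ) 1,
        Tendsto (fun n => (f n i).f x) atTop (𝓝 0)) ∧
      ∀ (n : ℕ) (i : N) (al ak : A i),
        devUtil u (s (κ n)) i al - devUtil u (s (κ n)) i ak
          = (f n i).f' (s (κ n) i al) - (f n i).f' (s (κ n) i ak) := by
  classical
  have hstrat : ∀ n, IsStrategy (s n) := fun n => (hs n).2.1
  have hp1 : ∀ n (i : N) (a : A i), s n i a ≤ 1 := by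
    intro n i a
    calc s n i a ≤ ∑ b, s n i b :=
          Finset.single_le_sum (fun b _ => (hstrat n).1 i b) (Finset.mem_univ a)
      _ = 1 := (hstrat n).2 i
  have hH : ∀ n (i : N), ∃ cc : ControlCost,
      (∀ al ak, cc.f' (s n i al) - cc.f' (s n i ak)
          = devUtil u (s n) i al - devUtil u (s n) i ak) ∧
      (∀ x, 0 < x → x ≤ 1 → 0 ≤ cc.f x) ∧
      (∀ x V, 0 < x → x ≤ 1 → (∃ b, V ≤ devUtil u (s n) i b) →
        (∀ b, V ≤ devUtil u (s n) i b ∨ s n i b + 1/((n:ℝ)+1) ≤ x) →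
        cc.f x ≤ (Finset.univ.sup' Finset.univ_nonempty (devUtil u (s n) i) - V)
          + 3 * (1/((n:ℝ)+1)) + (1/((n:ℝ)+1)) / x) := by
    intro n i
    refine exists_controlCost (s n i) (devUtil u (s n) i) (fun a => (hs n).1 i a) (hp1 n i)
      ?_ ?_ (1/((n:ℝ)+1)) (by positivity) ?_
    · intro a b hab
      refine not_le.1 fun hc => ?_
      exact absurd (((hs n).2.2 i b a).2 hc) (not_le.2 hab)
    · intro a b hab
      exact le_antisymm (((hs n).2.2 i b a).1 (le_of_eq hab))
        (((hs n).2.2 i a b).1 (le_of_eq hab.symm))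
    · rw [div_le_one (by positivity)]
      have : (0:ℝ) ≤ (n:ℝ) := Nat.cast_nonneg n
      linarith
  choose cc hFOC hnn hub using hH
  refine ⟨id, fun n i => cc n i, strictMono_id, ?_, fun n i al ak => (hFOC n i al ak).symm⟩
  intro i x hx
  obtain ⟨hx0, hx1⟩ := hx
  obtain ⟨b0, -, hb0ne⟩ : ∃ b0 ∈ Finset.univ, σ i b0 ≠ 0 :=
    Finset.exists_ne_zero_of_sum_ne_zero (by rw [hσ.1.2 i]; exact one_ne_zero)
  have hb0 : 0 < σ i b0 := lt_of_le_of_ne (hσ.1.1 i b0) (Ne.symm hb0ne)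
  set vI : ℝ := expUtil u σ i with hvI
  have hsupp : ∀ b : A i, 0 < σ i b → devUtil u σ i b = vI :=
    fun b hb => devUtil_eq_expUtil_of_pos u σ hσ i b hb
  have hle : ∀ a : A i, devUtil u σ i a ≤ vI := fun a => devUtil_le_expUtil u σ hσ i a
  rw [Metric.tendsto_atTop]
  intro ε hε
  have E1 : ∀ᶠ n in atTop, ∀ a : A i,
      dist (devUtil u (s n) i a) (devUtil u σ i a) < ε/8 :=
    eventually_all.2 fun a =>
      Metric.tendsto_nhds.1 (tendsto_devUtil u s σ hconv i a) _ (by positivity)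
  have E2 : ∀ᶠ n in atTop, ∀ b : A i, σ i b = 0 → s n i b + 1/((n:ℝ)+1) ≤ x := by
    rw [eventually_all]
    intro b
    by_cases hb : σ i b = 0
    · have h1 : Tendsto (fun n => s n i b + 1/((n:ℝ)+1)) atTop (𝓝 0) := by
        have h2 := hconv i b
        rw [hb] at h2
        simpa using h2.add tendsto_one_div_add_atTop_nhds_zero_nat
      filter_upwards [h1.eventually_le_const hx0] with n hn _
      exact hn
    · filter_upwards with n hn
      exact absurd hn hb
  have E3 : ∀ᶠ n : ℕ in atTop, 1/((n:ℝ)+1) < ε/8 :=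
    tendsto_one_div_add_atTop_nhds_zero_nat.eventually_lt_const (by positivity)
  have E4 : ∀ᶠ n : ℕ in atTop, (1/((n:ℝ)+1))/x < ε/8 := by
    have hE := tendsto_one_div_add_atTop_nhds_zero_nat.div_const x
    rw [zero_div] at hE
    exact hE.eventually_lt_const (by positivity)
  obtain ⟨Nb, hNb⟩ := eventually_atTop.1 (E1.and (E2.and (E3.and E4)))
  refine ⟨Nb, fun n hn => ?_⟩
  obtain ⟨h1, h2, h3, h4⟩ := hNb n hn
  have hVb0 : vI - ε/8 ≤ devUtil u (s n) i b0 := by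
    have := h1 b0
    rw [Real.dist_eq, abs_lt] at this
    have hb0v := hsupp b0 hb0
    linarith [this.1]
  have hcases : ∀ b : A i, vI - ε/8 ≤ devUtil u (s n) i b ∨ s n i b + 1/((n:ℝ)+1) ≤ x := by
    intro b
    by_cases hb : σ i b = 0
    · exact Or.inr (h2 b hb)
    · left
      have hbpos : 0 < σ i b := lt_of_le_of_ne (hσ.1.1 i b) (Ne.symm hb)
      have := h1 b
      rw [Real.dist_eq, abs_lt] at this
      have := hsupp b hbpos
      linarith [(h1 b).le]
  have hsup : Finset.univ.sup' Finset.univ_nonempty (devUtil u (s n) i) ≤ vI + ε/8 := by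
    refine Finset.sup'_le _ _ fun a _ => ?_
    have := h1 a
    rw [Real.dist_eq, abs_lt] at this
    linarith [hle a, this.1]
  have hb := hub n i x (vI - ε/8) hx0 hx1 ⟨b0, hVb0⟩ hcases
  have hnn' := hnn n i x hx0 hx1
  rw [Real.dist_eq, sub_zero, abs_of_nonneg hnn']
  have h5 : (1:ℝ)/((n:ℝ)+1) > 0 := by positivity
  calc (cc n i).f x ≤ (Finset.univ.sup' Finset.univ_nonempty (devUtil u (s n) i) - (vI - ε/8))
        + 3 * (1/((n:ℝ)+1)) + (1/((n:ℝ)+1)) / x := hb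
    _ < ε := by
        have : (1/((n:ℝ)+1))/x < ε/8 := h4
        linarith [hsup]
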